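/- Let C be a binary constant-weight code of length n, weight k, and minimum Hamming distance 2δ. For each v ∈ C, let C_v be a rank-metric code of matrices fitting the Ferrers diagram of EF(v) with minimum rank distance δ. Then the union over v ∈ C of the subspaces generated by EF(v[c]), c ∈ C_v, is a constant-dimension code in G_q(n,k) with minimum subspace distance 2δ (assuming each C_v has at least two codewords or the combinatorial setup guarantees distance 2δ is attained). -/

import Mathlib

open Module

/-- The subspace distance `d_S(U,V) = dim U + dim V - 2 dim (U ⊓ V)` (valued in `ℤ`). -/
noncomputable def subspaceDist (Fq : Type*) [Field Fq] (n : ℕ)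
    (U V : Submodule Fq (Fin n → Fq)) : ℤ :=
  (finrank Fq U : ℤ) + (finrank Fq V : ℤ) - 2 * (finrank Fq ↥(U ⊓ V) : ℤ)

/-- `M` is in reduced row echelon form with pivot columns `p`. -/
def IsRREFwithPivots {Fq : Type*} [Field Fq] {k n : ℕ}
    (M : Matrix (Fin k) (Fin n) Fq) (p : Fin k → Fin n) : Prop :=
  StrictMono p ∧
  (∀ i, M i (p i) = 1) ∧
  (∀ i (j : Fin n), (j : ℕ) < (p i : ℕ) → M i j = 0) ∧
  (∀ i i', i' ≠ i → M i' (p i) = 0)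

section Aux
variable {Fq : Type*} [Field Fq] {k n : ℕ}

lemma rref_repr {M : Matrix (Fin k) (Fin n) Fq} {p : Fin k → Fin n}
    (h : IsRREFwithPivots M p) {u : Fin n → Fq}
    (hu : u ∈ Submodule.span Fq (Set.range M)) :
    u = ∑ i, u (p i) • M i := by
  set L : (Fin n → Fq) →ₗ[Fq] (Fin n → Fq) :=
    ∑ i, LinearMap.smulRight (LinearMap.proj (p i)) (M i) with hLdef
  have hL : ∀ w : Fin n → Fq, L w = ∑ i, w (p i) • M i := by
    intro w
    simp [hLdef, LinearMap.sum_apply]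
  have hle : Submodule.span Fq (Set.range M) ≤ LinearMap.ker (LinearMap.id - L) := by
    rw [Submodule.span_le]
    rintro _ ⟨i0, rfl⟩
    simp only [SetLike.mem_coe, LinearMap.mem_ker, LinearMap.sub_apply, LinearMap.id_apply,
      hL, sub_eq_zero]
    rw [Finset.sum_eq_single i0]
    · rw [h.2.1 i0, one_smul]
    · intro i _ hne
      rw [h.2.2.2 i i0 (Ne.symm hne), zero_smul]
    · intro habs; exact absurd (Finset.mem_univ i0) habs
  have := hle hu
  rw [LinearMap.mem_ker, LinearMap.sub_apply, LinearMap.id_apply, sub_eq_zero] at this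
  exact this.trans (hL u)

lemma rref_finrank {M : Matrix (Fin k) (Fin n) Fq} {p : Fin k → Fin n}
    (h : IsRREFwithPivots M p) :
    finrank Fq (Submodule.span Fq (Set.range M)) = k := by
  have li : LinearIndependent Fq M := by
    apply Fintype.linearIndependent_iff.mpr
    intro g hg i
    have := congrFun hg (p i)
    simp only [Finset.sum_apply, Pi.smul_apply, smul_eq_mul, Pi.zero_apply] at this
    rwa [Finset.sum_eq_single i (fun i' _ hne => by rw [h.2.2.2 i i' hne, mul_zero])
      (fun habs => absurd (Finset.mem_univ i) habs), h.2.1 i, mul_one] at this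
  rw [finrank_span_eq_card li, Fintype.card_fin]

lemma rref_zero_on_pivots {M : Matrix (Fin k) (Fin n) Fq} {p : Fin k → Fin n}
    (h : IsRREFwithPivots M p) {u : Fin n → Fq}
    (hu : u ∈ Submodule.span Fq (Set.range M)) (hz : ∀ i, u (p i) = 0) : u = 0 := by
  rw [rref_repr h hu]
  simp [hz]

lemma rref_leading {M : Matrix (Fin k) (Fin n) Fq} {p : Fin k → Fin n}
    (h : IsRREFwithPivots M p) {u : Fin n → Fq}
    (hu : u ∈ Submodule.span Fq (Set.range M)) (hne : u ≠ 0) :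
    ∃ i, u (p i) ≠ 0 ∧ ∀ j : Fin n, (j : ℕ) < (p i : ℕ) → u j = 0 := by
  classical
  set s : Finset (Fin k) := Finset.univ.filter (fun i => u (p i) ≠ 0) with hs
  have hsne : s.Nonempty := by
    by_contra hempty
    rw [Finset.not_nonempty_iff_eq_empty, Finset.filter_eq_empty_iff] at hempty
    exact hne (rref_zero_on_pivots h hu (fun i => by
      have := hempty (Finset.mem_univ i); simpa using this))
  refine ⟨s.min' hsne, ?_, ?_⟩
  · exact (Finset.mem_filter.mp (s.min'_mem hsne)).2
  · intro j hj
    have hrepr := rref_repr h hu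
    rw [hrepr]
    simp only [Finset.sum_apply, Pi.smul_apply, smul_eq_mul]
    apply Finset.sum_eq_zero
    intro i _
    by_cases hi : u (p i) = 0
    · rw [hi, zero_mul]
    · have : s.min' hsne ≤ i := s.min'_le i (Finset.mem_filter.mpr ⟨Finset.mem_univ i, hi⟩)
      have hple : (p (s.min' hsne) : ℕ) ≤ (p i : ℕ) := h.1.monotone this
      rw [h.2.2.1 i j (lt_of_lt_of_le hj hple), mul_zero]

lemma finrank_le_card_of_support (W : Submodule Fq (Fin n → Fq)) (S : Finset (Fin n))
    (h : ∀ u ∈ W, u ≠ 0 → ∃ j ∈ S, u j ≠ 0) : finrank Fq W ≤ S.card := by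
  classical
  let f : W →ₗ[Fq] ({ j // j ∈ S } → Fq) :=
    (LinearMap.funLeft Fq Fq (Subtype.val)) ∘ₗ W.subtype
  have hinj : Function.Injective f := by
    rw [← LinearMap.ker_eq_bot, Submodule.eq_bot_iff]
    intro u hker
    rw [LinearMap.mem_ker] at hker
    ext1
    by_contra hne
    obtain ⟨j, hjS, hj⟩ := h u.1 u.2 hne
    exact hj (congrFun hker ⟨j, hjS⟩)
  calc finrank Fq W ≤ finrank Fq ({ j // j ∈ S } → Fq) :=
        LinearMap.finrank_le_finrank_of_injective hinj
    _ = S.card := by rw [Module.finrank_pi, Fintype.card_coe]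

end Aux

/-- The multilevel construction: from a binary constant-weight code `C` of
length `n`, weight `k` and minimum Hamming distance `2δ`, and for each `v ∈ C`
a rank-metric code `Cv v` of matrices in the echelon Ferrers form `EF(v)`
(with pivots `piv v` at the support of `v`) with minimum rank distance `δ`,
the union of the row spaces of the matrices `EF(v[c])` is a constant-dimension
code in `G_q(n,k)` with minimum subspace distance `2δ`. -/
theorem multilevel_construction (Fq : Type*) [Field Fq] [Fintype Fq] (n k δ : ℕ)
    (C : Set (Fin n → Bool))
    (hwt : ∀ v ∈ C, (Finset.univ.filter fun j => v j = true).card = k)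
    (hdH : ∀ v₁ ∈ C, ∀ v₂ ∈ C, v₁ ≠ v₂ →
      2 * δ ≤ (Finset.univ.filter fun j => v₁ j ≠ v₂ j).card)
    (Cv : (Fin n → Bool) → Set (Matrix (Fin k) (Fin n) Fq))
    (piv : (Fin n → Bool) → Fin k → Fin n)
    (hpiv : ∀ v ∈ C, ∀ j, v j = true ↔ ∃ i, piv v i = j)
    (hRREF : ∀ v ∈ C, ∀ M ∈ Cv v, IsRREFwithPivots M (piv v))
    (hrk : ∀ v ∈ C, ∀ M₁ ∈ Cv v, ∀ M₂ ∈ Cv v, M₁ ≠ M₂ → δ ≤ (M₁ - M₂).rank)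
    (hattain : ∃ v ∈ C, ∃ M₁ ∈ Cv v, ∃ M₂ ∈ Cv v, M₁ ≠ M₂ ∧ (M₁ - M₂).rank = δ)
    (Code : Set (Submodule Fq (Fin n → Fq)))
    (hCode : Code = {U | ∃ v ∈ C, ∃ M ∈ Cv v, U = Submodule.span Fq (Set.range M)}) :
    (∀ U ∈ Code, finrank Fq U = k) ∧
    (∀ U ∈ Code, ∀ V ∈ Code, U ≠ V → (2 * δ : ℤ) ≤ subspaceDist Fq n U V) ∧
    (∃ U ∈ Code, ∃ V ∈ Code, U ≠ V ∧ subspaceDist Fq n U V = 2 * δ) := by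
  classical
  -- the key computation for a common pivot vector
  have key : ∀ v ∈ C, ∀ M₁ ∈ Cv v, ∀ M₂ ∈ Cv v, M₁ ≠ M₂ →
      Submodule.span Fq (Set.range M₁) ≠ Submodule.span Fq (Set.range M₂) ∧
      subspaceDist Fq n (Submodule.span Fq (Set.range M₁)) (Submodule.span Fq (Set.range M₂))
        = 2 * ((M₁ - M₂).rank : ℤ) := by
    intro v hv M₁ hM₁ M₂ hM₂ hne
    have h₁ := hRREF v hv M₁ hM₁
    have h₂ := hRREF v hv M₂ hM₂
    set p := piv v with hp
    set U := Submodule.span Fq (Set.range M₁) with hU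
    set V := Submodule.span Fq (Set.range M₂) with hV
    set W := Submodule.span Fq (Set.range (M₁ - M₂)) with hW
    have hWpiv : ∀ w ∈ W, ∀ i, w (p i) = 0 := by
      intro w hw i
      have hle : W ≤ LinearMap.ker (LinearMap.proj (R := Fq) (φ := fun _ : Fin n => Fq) (p i)) := by
        rw [hW, Submodule.span_le]
        rintro _ ⟨i', rfl⟩
        simp only [SetLike.mem_coe, LinearMap.mem_ker, LinearMap.proj_apply]
        by_cases hii : i' = i
        · subst hii; rw [Matrix.sub_apply, h₁.2.1, h₂.2.1, sub_self]
        · rw [Matrix.sub_apply, h₁.2.2.2 i i' hii, h₂.2.2.2 i i' hii, sub_self]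
      exact hle hw
    have hVW : V ⊓ W = ⊥ := by
      rw [Submodule.eq_bot_iff]
      intro u hu
      exact rref_zero_on_pivots h₂ hu.1 (fun i => hWpiv u hu.2 i)
    have hrow : ∀ i, (M₁ - M₂) i = M₁ i - M₂ i := by
      intro i; funext j; simp [Matrix.sub_apply]
    have hsup : U ⊔ V = V ⊔ W := by
      apply le_antisymm
      · apply sup_le
        · rw [hU, Submodule.span_le]
          rintro _ ⟨i, rfl⟩
          have heq : M₁ i = M₂ i + (M₁ - M₂) i := by rw [hrow]; ring
          rw [SetLike.mem_coe, heq]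
          exact Submodule.add_mem _
            (Submodule.mem_sup_left (Submodule.subset_span ⟨i, rfl⟩))
            (Submodule.mem_sup_right (Submodule.subset_span ⟨i, rfl⟩))
        · exact le_sup_left
      · apply sup_le
        · exact le_sup_right
        · rw [hW, Submodule.span_le]
          rintro _ ⟨i, rfl⟩
          rw [SetLike.mem_coe, hrow]
          exact Submodule.sub_mem _
            (Submodule.mem_sup_left (Submodule.subset_span ⟨i, rfl⟩))
            (Submodule.mem_sup_right (Submodule.subset_span ⟨i, rfl⟩))
    have hrankW : finrank Fq W = (M₁ - M₂).rank := ((M₁ - M₂).rank_eq_finrank_span_row).symm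
    have hUVsup : finrank Fq ↥(U ⊔ V) = k + (M₁ - M₂).rank := by
      have hvw := Submodule.finrank_sup_add_finrank_inf_eq V W
      rw [hVW, finrank_bot, rref_finrank h₂, hrankW] at hvw
      rw [hsup]
      omega
    have hUVinf : finrank Fq ↥(U ⊓ V) + (M₁ - M₂).rank = k := by
      have huv := Submodule.finrank_sup_add_finrank_inf_eq U V
      rw [hUVsup, rref_finrank h₁, rref_finrank h₂] at huv
      omega
    constructor
    · intro heq
      have hWV : W ≤ V := by
        have : V ⊔ W = V := by rw [← hsup, ← heq, sup_idem]
        rw [← this]; exact le_sup_right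
      have hWbot : W = ⊥ := by
        rw [← le_bot_iff, ← hVW]
        exact le_inf hWV le_rfl
      apply hne
      ext i j
      have hz : (M₁ - M₂) i = 0 := by
        have : (M₁ - M₂) i ∈ W := Submodule.subset_span ⟨i, rfl⟩
        rwa [hWbot, Submodule.mem_bot] at this
      have := congrFun hz j
      rw [Matrix.sub_apply] at this
      exact sub_eq_zero.mp (by simpa using this)
    · rw [subspaceDist, rref_finrank h₁, rref_finrank h₂]
      omega
  subst hCode
  refine ⟨?_, ?_, ?_⟩
  · rintro U ⟨v, hv, M, hM, rfl⟩
    exact rref_finrank (hRREF v hv M hM)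
  · rintro U ⟨v₁, hv₁, M₁, hM₁, rfl⟩ V ⟨v₂, hv₂, M₂, hM₂, rfl⟩ hUV
    by_cases hveq : v₁ = v₂
    · subst hveq
      have hMne : M₁ ≠ M₂ := by rintro rfl; exact hUV rfl
      rw [(key v₁ hv₁ M₁ hM₁ M₂ hM₂ hMne).2]
      have := hrk v₁ hv₁ M₁ hM₁ M₂ hM₂ hMne
      omega
    · set U := Submodule.span Fq (Set.range M₁) with hU
      set V := Submodule.span Fq (Set.range M₂) with hV
      set S : Finset (Fin n) := Finset.univ.filter (fun j => v₁ j = true ∧ v₂ j = true) with hS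
      have hsupp : ∀ u ∈ U ⊓ V, u ≠ 0 → ∃ j ∈ S, u j ≠ 0 := by
        intro u hu hune
        obtain ⟨i₁, hne₁, hz₁⟩ := rref_leading (hRREF v₁ hv₁ M₁ hM₁) hu.1 hune
        obtain ⟨i₂, hne₂, hz₂⟩ := rref_leading (hRREF v₂ hv₂ M₂ hM₂) hu.2 hune
        have heqp : piv v₁ i₁ = piv v₂ i₂ := by
          rcases lt_trichotomy ((piv v₁ i₁ : ℕ)) ((piv v₂ i₂ : ℕ)) with h | h | h
          · exact absurd (hz₂ _ h) hne₁
          · exact Fin.ext h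
          · exact absurd (hz₁ _ h) hne₂
        refine ⟨piv v₁ i₁, Finset.mem_filter.mpr ⟨Finset.mem_univ _, ?_, ?_⟩, hne₁⟩
        · exact (hpiv v₁ hv₁ _).mpr ⟨i₁, rfl⟩
        · exact (hpiv v₂ hv₂ _).mpr ⟨i₂, heqp.symm⟩
      have hdim : finrank Fq ↥(U ⊓ V) ≤ S.card := finrank_le_card_of_support _ _ hsupp
      have hcards : (Finset.univ.filter fun j => v₁ j = true).card
          + (Finset.univ.filter fun j => v₂ j = true).card
          = (Finset.univ.filter fun j => v₁ j ≠ v₂ j).card + 2 * S.card := by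
        rw [hS]
        simp only [Finset.card_filter]
        rw [← Finset.sum_add_distrib, Finset.mul_sum, ← Finset.sum_add_distrib]
        apply Finset.sum_congr rfl
        intro j _
        cases h1 : v₁ j <;> cases h2 : v₂ j <;> simp [h1, h2]
      rw [hwt v₁ hv₁, hwt v₂ hv₂] at hcards
      have hdiff := hdH v₁ hv₁ v₂ hv₂ hveq
      rw [subspaceDist, rref_finrank (hRREF v₁ hv₁ M₁ hM₁),
        rref_finrank (hRREF v₂ hv₂ M₂ hM₂)]
      omega
  · obtain ⟨v, hv, M₁, hM₁, M₂, hM₂, hMne, hr⟩ := hattain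
    refine ⟨Submodule.span Fq (Set.range M₁), ⟨v, hv, M₁, hM₁, rfl⟩,
      Submodule.span Fq (Set.range M₂), ⟨v, hv, M₂, hM₂, rfl⟩,
      (key v hv M₁ hM₁ M₂ hM₂ hMne).1, ?_⟩
    rw [(key v hv M₁ hM₁ M₂ hM₂ hMne).2, hr]
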